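/- If the manipulator picks exactly once (μ(a₁) = 1), then she cannot manipulate: for every ranking ≻ reported by a₁, u(φ_≻(a₁)) ≤ u_T. -/
import Mathlib


/-- One step of the sequential allocation process: an agent with ranking `rk`
(a bijection `Fin m ≃ Fin m`, lower rank = more preferred) greedily picks the
lowest-rank item among the remaining ones (the complement of the already
picked set `S`); if nothing is left, nothing happens. -/
def pickStep {m : ℕ} (rk : Fin m ≃ Fin m) (S : Finset (Fin m)) : Finset (Fin m) :=
  S ∪ Sᶜ.filter fun i => ∀ j ∈ Sᶜ, rk i ≤ rk j

/-- `pickedUpTo rpt π t` : the set of items picked during the first `t` steps of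
the sequential allocation process, where `π` is the (0-indexed) picking sequence
and agent `a` reports the ranking `rpt a`. -/
def pickedUpTo {A : Type*} {m : ℕ} (rpt : A → Fin m ≃ Fin m) (π : ℕ → A) :
    ℕ → Finset (Fin m)
  | 0 => ∅
  | t + 1 => pickStep (rpt (π t)) (pickedUpTo rpt π t)

/-- `alloc rpt π a` : the bundle of items obtained by agent `a` at the end of the
sequential allocation process (which runs for `m` steps). -/
def alloc {A : Type*} [DecidableEq A] {m : ℕ} (rpt : A → Fin m ≃ Fin m)
    (π : ℕ → A) (a : A) : Finset (Fin m) :=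
  (Finset.range m).biUnion fun t =>
    if π t = a then pickedUpTo rpt π (t + 1) \ pickedUpTo rpt π t else ∅

lemma filter_card_le_one {m : ℕ} (rk : Fin m ≃ Fin m) (S : Finset (Fin m)) :
    (Sᶜ.filter fun i => ∀ j ∈ Sᶜ, rk i ≤ rk j).card ≤ 1 := by
  apply Finset.card_le_one.mpr
  intro a ha b hb
  simp only [Finset.mem_filter] at ha hb
  exact rk.injective (le_antisymm (ha.2 b hb.1) (hb.2 a ha.1))

lemma pickedUpTo_card_le {A : Type*} {m : ℕ} (rpt : A → Fin m ≃ Fin m) (π : ℕ → A)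
    (t : ℕ) : (pickedUpTo rpt π t).card ≤ t := by
  induction t with
  | zero => simp [pickedUpTo]
  | succ t ih =>
    calc (pickedUpTo rpt π (t+1)).card
        ≤ (pickedUpTo rpt π t).card + _ := Finset.card_union_le _ _
      _ ≤ t + 1 := add_le_add ih (filter_card_le_one _ _)

lemma pickStep_sdiff {m : ℕ} (rk : Fin m ≃ Fin m) (S : Finset (Fin m)) :
    pickStep rk S \ S = Sᶜ.filter fun i => ∀ j ∈ Sᶜ, rk i ≤ rk j := by
  unfold pickStep
  rw [Finset.union_sdiff_left]
  apply Finset.sdiff_eq_self_of_disjoint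
  exact Finset.disjoint_left.mpr fun a ha hb => by
    simp only [Finset.mem_filter, Finset.mem_compl] at ha; exact ha.1 hb

lemma pickStep_sdiff_singleton {m : ℕ} (rk : Fin m ≃ Fin m) (S : Finset (Fin m))
    (hne : Sᶜ.Nonempty) :
    ∃ i₀, i₀ ∈ Sᶜ ∧ (∀ j ∈ Sᶜ, rk i₀ ≤ rk j) ∧ pickStep rk S \ S = {i₀} := by
  obtain ⟨i₀, hi₀, hmin⟩ := Sᶜ.exists_min_image (fun i => rk i) hne
  refine ⟨i₀, hi₀, hmin, ?_⟩
  rw [pickStep_sdiff]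
  ext a
  simp only [Finset.mem_filter, Finset.mem_singleton]
  constructor
  · rintro ⟨ha, h⟩
    exact rk.injective (le_antisymm (h i₀ hi₀) (hmin a ha))
  · rintro rfl; exact ⟨hi₀, hmin⟩

lemma pickedUpTo_agree {A : Type*} [DecidableEq A] {m : ℕ} (a₁ : A)
    (rk : A → Fin m ≃ Fin m) (r : Fin m ≃ Fin m) (π : ℕ → A) (t : ℕ)
    (h : ∀ s < t, π s ≠ a₁) :
    pickedUpTo (Function.update rk a₁ r) π t = pickedUpTo rk π t := by
  induction t with
  | zero => rfl
  | succ t ih =>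
    have h' : ∀ s < t, π s ≠ a₁ := fun s hs => h s (hs.trans (Nat.lt_succ_self t))
    show pickStep _ _ = pickStep _ _
    rw [ih h', Function.update_of_ne (h t (Nat.lt_succ_self t))]

lemma alloc_eq {A : Type*} [DecidableEq A] {m : ℕ} (a₁ : A)
    (rpt : A → Fin m ≃ Fin m) (π : ℕ → A) (t₀ : ℕ) (ht₀ : t₀ < m) (hp : π t₀ = a₁)
    (huniq : ∀ t < m, π t = a₁ → t = t₀) :
    alloc rpt π a₁ = pickedUpTo rpt π (t₀ + 1) \ pickedUpTo rpt π t₀ := by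
  ext i
  simp only [alloc, Finset.mem_biUnion, Finset.mem_range]
  constructor
  · rintro ⟨t, ht, hi⟩
    by_cases h : π t = a₁
    · rw [huniq t ht h] at hi; simpa [h, huniq t ht h, hp] using hi
    · simp [h] at hi
  · intro hi
    exact ⟨t₀, ht₀, by simpa [hp] using hi⟩

/-- if the manipulator picks exactly once (`μ(a₁) = 1`), then she
cannot manipulate: for every ranking `r` she reports, `u(φ_r(a₁)) ≤ u_T`.
Here `rk` are the truthful rankings, `u` is the manipulator's injective positive
utility function, consistent with her truthful ranking
(`rk a₁ i < rk a₁ j ↔ u j < u i`), and `u_T` is the utility of her bundle when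
reporting truthfully. -/
theorem statement15 {A : Type*} [DecidableEq A] {m : ℕ} (a₁ : A)
    (rk : A → Fin m ≃ Fin m) (π : ℕ → A) (u : Fin m → ℝ)
    (hpos : ∀ i, 0 < u i) (hinj : Function.Injective u)
    (hT : ∀ i j, rk a₁ i < rk a₁ j ↔ u j < u i)
    (hμ : ((Finset.range m).filter fun t => π t = a₁).card = 1)
    (r : Fin m ≃ Fin m) :
    ∑ i ∈ alloc (Function.update rk a₁ r) π a₁, u i
      ≤ ∑ i ∈ alloc rk π a₁, u i := by
  obtain ⟨t₀, ht₀⟩ := Finset.card_eq_one.mp hμ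
  have hmem : t₀ ∈ (Finset.range m).filter fun t => π t = a₁ := ht₀ ▸ Finset.mem_singleton_self t₀
  simp only [Finset.mem_filter, Finset.mem_range] at hmem
  obtain ⟨ht₀m, hpt₀⟩ := hmem
  have huniq : ∀ t < m, π t = a₁ → t = t₀ := by
    intro t ht hp
    have : t ∈ ({t₀} : Finset ℕ) := ht₀ ▸ (Finset.mem_filter.mpr ⟨Finset.mem_range.mpr ht, hp⟩)
    exact Finset.mem_singleton.mp this
  have hnolt : ∀ s < t₀, π s ≠ a₁ := fun s hs hp =>
    absurd (huniq s (hs.trans ht₀m) hp) hs.ne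
  set rpt' := Function.update rk a₁ r with hrpt'
  -- the common prefix
  set C := pickedUpTo rk π t₀ with hC
  have hagree : pickedUpTo rpt' π t₀ = C := pickedUpTo_agree a₁ rk r π t₀ hnolt
  have hCne : Cᶜ.Nonempty := by
    rw [← Finset.card_pos, Finset.card_compl]
    have h1 := pickedUpTo_card_le rk π t₀
    rw [← hC] at h1
    simp only [Fintype.card_fin]
    omega
  -- truthful pick
  obtain ⟨i₀, hi₀C, hi₀min, hi₀⟩ := pickStep_sdiff_singleton (rk a₁) C hCne
  obtain ⟨j₀, hj₀C, _, hj₀⟩ := pickStep_sdiff_singleton r C hCne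
  have hT' : alloc rk π a₁ = {i₀} := by
    rw [alloc_eq a₁ rk π t₀ ht₀m hpt₀ huniq]
    show pickStep (rk (π t₀)) C \ C = {i₀}
    rw [hpt₀]; exact hi₀
  have hM : alloc rpt' π a₁ = {j₀} := by
    rw [alloc_eq a₁ rpt' π t₀ ht₀m hpt₀ huniq]
    show pickStep (rpt' (π t₀)) (pickedUpTo rpt' π t₀) \ pickedUpTo rpt' π t₀ = {j₀}
    rw [hagree, hpt₀, hrpt', Function.update_self]
    exact hj₀
  rw [hT', hM, Finset.sum_singleton, Finset.sum_singleton]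
  rcases eq_or_ne j₀ i₀ with h | h
  · rw [h]
  · have : rk a₁ i₀ < rk a₁ j₀ :=
      lt_of_le_of_ne (hi₀min j₀ hj₀C) (fun he => h ((rk a₁).injective he.symm))
    exact le_of_lt ((hT i₀ j₀).mp this)
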